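/- arXiv:2401.08388 — 2 statements merged into one kernel-verified Lean document; each statement's English description precedes it below -/
import Mathlib

section
/- For each c ≥ 3, the number of palindromic or anti-palindromic even-length sequences of nonzero integers with 2·Σ|a_i| − ℓ = c equals e_p(c) = (2/3)·(2^{⌊(c−1)/2⌋} − (−1)^{⌊(c−1)/2⌋}). -/
open Classical

/-- The number of sign changes in a finite sequence of integers. -/
def signChanges (l : List ℤ) : ℕ :=
  ((l.zip l.tail).filter (fun p => p.1 * p.2 < 0)).length

/-- The sum of the absolute values of the entries. -/
def absSum (l : List ℤ) : ℕ := (l.map Int.natAbs).sum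

/-- An even continued fraction representation: a nonempty even-length
sequence of nonzero integers. -/
def IsECF (l : List ℤ) : Prop :=
  l ≠ [] ∧ Even l.length ∧ ∀ x ∈ l, x ≠ 0

/-- Palindromic or anti-palindromic sequences. -/
def IsPalOrAnti (l : List ℤ) : Prop :=
  l.reverse = l ∨ l.reverse = l.map (fun x => -x)

/-- The set `E(c)` of even continued fractions with crossing number `c`. -/
def Ecross (c : ℕ) : Set (List ℤ) :=
  {l | IsECF l ∧ (2 * absSum l : ℤ) - signChanges l = c}

/-- The set `E(c,b)` of even continued fractions with crossing number `c`
and braid index `b`. -/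
def Eset (c b : ℕ) : Set (List ℤ) :=
  {l | IsECF l ∧ (2 * absSum l : ℤ) - signChanges l = c ∧
    (absSum l : ℤ) - signChanges l + 1 = b}

noncomputable def e (c b : ℕ) : ℕ := (Eset c b).ncard

noncomputable def eTot (c : ℕ) : ℕ := (Ecross c).ncard

noncomputable def ep (c b : ℕ) : ℕ := (Eset c b ∩ {l | IsPalOrAnti l}).ncard

noncomputable def epTot (c : ℕ) : ℕ := (Ecross c ∩ {l | IsPalOrAnti l}).ncard


/-- recursive sign-change count -/
def sc : List ℤ → ℕ
  | [] => 0
  | [_] => 0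
  | a :: b :: t => (if a * b < 0 then 1 else 0) + sc (b :: t)


lemma sc_eq : ∀ l : List ℤ, signChanges l = sc l
  | [] => rfl
  | [_] => rfl
  | a :: b :: t => by
    have ih := sc_eq (b :: t)
    simp only [signChanges, sc, List.tail, List.zip] at *
    simp only [List.zipWith_cons_cons, List.filter_cons] at *
    split <;> simp_all <;> omega

lemma sc_cons_cons (a b : ℤ) (t : List ℤ) :
    sc (a :: b :: t) = (if a * b < 0 then 1 else 0) + sc (b :: t) := rfl

lemma sc_append (l₁ l₂ : List ℤ) (h₁ : l₁ ≠ []) (h₂ : l₂ ≠ []) :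
    sc (l₁ ++ l₂) = sc l₁ + sc l₂ +
      (if l₁.getLastD 1 * l₂.headD 1 < 0 then 1 else 0) := by
  induction l₁ with
  | nil => simp at h₁
  | cons a t ih =>
    cases t with
    | nil =>
      cases l₂ with
      | nil => simp at h₂
      | cons b u => simp [sc_cons_cons, sc]; omega
    | cons b u =>
      have := ih (by simp)
      simp only [List.cons_append, sc_cons_cons] at *
      rw [this]
      simp [List.getLastD]
      omega

lemma getLastD_reverse (l : List ℤ) (d : ℤ) : l.reverse.getLastD d = l.headD d := by
  cases l with
  | nil => rfl
  | cons a t => simp [List.getLastD_eq_getLast?, List.getLast?_reverse]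

lemma sc_reverse : ∀ l : List ℤ, sc l.reverse = sc l
  | [] => rfl
  | [_] => rfl
  | a :: b :: t => by
    have ih := sc_reverse (b :: t)
    have h : (a :: b :: t).reverse = (b :: t).reverse ++ [a] := by simp
    rw [h, sc_append _ _ (by simp) (by simp), ih, sc_cons_cons]
    rw [getLastD_reverse]
    simp [sc, mul_comm]
    omega

lemma sc_map_neg : ∀ l : List ℤ, sc (l.map (fun x => -x)) = sc l
  | [] => rfl
  | [_] => rfl
  | a :: b :: t => by
    have ih := sc_map_neg (b :: t)
    simp only [List.map_cons] at *
    rw [sc_cons_cons, sc_cons_cons, ih, neg_mul_neg]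


lemma absSum_append (l m : List ℤ) : absSum (l ++ m) = absSum l + absSum m := by
  simp [absSum]

lemma absSum_reverse (l : List ℤ) : absSum l.reverse = absSum l := by
  simp [absSum, List.sum_reverse]

lemma absSum_map_neg (l : List ℤ) : absSum (l.map (fun x => -x)) = absSum l := by
  simp only [absSum, List.map_map]
  congr 1
  apply List.map_congr_left
  intro x _
  simp

lemma sc_lt_length {l : List ℤ} (h : l ≠ []) : sc l < l.length := by
  induction l with
  | nil => simp at h
  | cons a t ih =>
    cases t with
    | nil => simp [sc]
    | cons b u =>
      have := ih (by simp)
      rw [sc_cons_cons]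
      simp only [List.length_cons] at *
      split <;> omega

lemma length_le_absSum {l : List ℤ} (h : ∀ x ∈ l, x ≠ 0) : l.length ≤ absSum l := by
  induction l with
  | nil => simp [absSum]
  | cons a t ih =>
    have h1 : a ≠ 0 := h a (by simp)
    have h2 := ih (fun x hx => h x (by simp [hx]))
    have : 1 ≤ a.natAbs := by omega
    simp only [absSum, List.map_cons, List.sum_cons, List.length_cons] at *
    omega

lemma mem_le_absSum {l : List ℤ} {x : ℤ} (h : x ∈ l) : x.natAbs ≤ absSum l := by
  induction l with
  | nil => simp at h
  | cons a t ih =>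
    simp only [absSum, List.map_cons, List.sum_cons] at *
    rcases List.mem_cons.1 h with rfl | h
    · omega
    · have := ih h; omega

def val (l : List ℤ) : ℤ := 2 * absSum l - sc l

def F (d : ℕ) : Set (List ℤ) := {l | l ≠ [] ∧ (∀ x ∈ l, x ≠ 0) ∧ val l = d}

lemma F_bounds {d : ℕ} {l : List ℤ} (h : l ∈ F d) :
    l.length ≤ d ∧ absSum l ≤ d := by
  obtain ⟨hne, hnz, hv⟩ := h
  have h1 := sc_lt_length hne
  have h2 := length_le_absSum hnz
  simp only [val] at hv
  omega

lemma F_finite (d : ℕ) : (F d).Finite := by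
  have hIcc : (Set.Icc (-(d:ℤ)) d).Finite := Set.finite_Icc _ _
  haveI : Finite ↥(Set.Icc (-(d:ℤ)) d) := hIcc.to_subtype
  have hfin : {l : List ↥(Set.Icc (-(d:ℤ)) d) | l.length ≤ d}.Finite :=
    List.finite_length_le _ _
  apply Set.Finite.subset (hfin.image (fun l => l.map Subtype.val))
  intro l hl
  obtain ⟨hlen, hS⟩ := F_bounds hl
  have hmem : ∀ x ∈ l, x ∈ Set.Icc (-(d:ℤ)) d := by
    intro x hx
    have := mem_le_absSum hx
    constructor <;> omega
  refine ⟨l.pmap (fun x hx => (⟨x, hx⟩ : ↥(Set.Icc (-(d:ℤ)) d))) hmem, ?_, ?_⟩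
  · simp [Set.mem_setOf_eq, List.length_pmap, hlen]
  · simp [List.map_pmap]

noncomputable def fc (d : ℕ) : ℕ := (F d).ncard

lemma val_ge {l : List ℤ} (hne : l ≠ []) (hnz : ∀ x ∈ l, x ≠ 0) :
    (l.length : ℤ) + 1 ≤ val l := by
  have h1 := sc_lt_length hne
  have h2 := length_le_absSum hnz
  simp only [val]
  omega

lemma F_two : F 2 = {[1], [-1]} := by
  ext l
  constructor
  · rintro ⟨hne, hnz, hv⟩
    have hge := val_ge hne hnz
    rw [hv] at hge
    have hlen : l.length ≤ 1 := by exact_mod_cast by omega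
    match l, hne, hlen with
    | [a], _, _ =>
      have ha : a ≠ 0 := hnz a (by simp)
      simp only [val, absSum, sc, List.map_cons, List.map_nil, List.sum_cons,
        List.sum_nil] at hv
      have : a.natAbs = 1 := by omega
      have : a = 1 ∨ a = -1 := by omega
      rcases this with rfl | rfl <;> simp
  · rintro (rfl | rfl) <;> exact ⟨by simp, by simp, by simp [val, absSum]; rfl⟩

lemma F_three : F 3 = {[1, -1], [-1, 1]} := by
  ext l
  constructor
  · rintro ⟨hne, hnz, hv⟩
    have hge := val_ge hne hnz
    rw [hv] at hge
    have hlen : l.length ≤ 2 := by exact_mod_cast by omega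
    match l, hne, hlen with
    | [a], _, _ =>
      simp only [val, absSum, sc, List.map_cons, List.map_nil, List.sum_cons,
        List.sum_nil] at hv
      omega
    | [a, b], _, _ =>
      have ha : a ≠ 0 := hnz a (by simp)
      have hb : b ≠ 0 := hnz b (by simp)
      simp only [val, absSum, sc, List.map_cons, List.map_nil, List.sum_cons,
        List.sum_nil] at hv
      have hab : a * b < 0 := by
        by_contra hcon
        simp [hcon] at hv
        omega
      rw [if_pos hab] at hv
      have ha1 : a = 1 ∨ a = -1 := by omega
      have hb1 : b = 1 ∨ b = -1 := by omega
      rw [mul_neg_iff] at hab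
      have : a = 1 ∧ b = -1 ∨ a = -1 ∧ b = 1 := by omega
      rcases this with ⟨rfl, rfl⟩ | ⟨rfl, rfl⟩ <;> simp
  · rintro (rfl | rfl) <;>
      refine ⟨by simp, by simp, ?_⟩ <;> simp [val, absSum, sc_cons_cons] <;> rfl

lemma fc_two : fc 2 = 2 := by
  rw [fc, F_two]
  rw [Set.ncard_pair (by simp)]

lemma fc_three : fc 3 = 2 := by
  rw [fc, F_three]
  rw [Set.ncard_pair (by simp)]

def phiA : List ℤ → List ℤ
  | [] => []
  | a :: t => (if 0 < a then a + 1 else a - 1) :: t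

def phiB : List ℤ → List ℤ
  | [] => []
  | a :: t => (if 0 < a then 1 else -1) :: a :: t

def phiC : List ℤ → List ℤ
  | [] => []
  | a :: t => (if 0 < a then -1 else 1) :: a :: t

lemma sc_cons_sign {a a' : ℤ} (t : List ℤ) (h1 : 0 < a ↔ 0 < a')
    (h2 : a < 0 ↔ a' < 0) : sc (a :: t) = sc (a' :: t) := by
  cases t with
  | nil => rfl
  | cons b u =>
    rw [sc_cons_cons, sc_cons_cons]
    have : a * b < 0 ↔ a' * b < 0 := by
      rw [mul_neg_iff, mul_neg_iff]; tauto
    simp [this]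

lemma val_cons_cons (a b : ℤ) (u : List ℤ) :
    val (a :: b :: u) = 2 * a.natAbs + val (b :: u)
      - (if a * b < 0 then 1 else 0) := by
  simp only [val, absSum, List.map_cons, List.sum_cons, sc_cons_cons]
  split <;> push_cast <;> ring

lemma val_singleton (a : ℤ) : val [a] = 2 * a.natAbs := by
  simp [val, absSum]; rfl

lemma phiA_mem {d : ℕ} {l : List ℤ} (h : l ∈ F d) : phiA l ∈ F (d + 2) := by
  obtain ⟨hne, hnz, hv⟩ := h
  match l, hne with
  | a :: t, _ =>
    have ha : a ≠ 0 := hnz a (by simp)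
    set a' : ℤ := if 0 < a then a + 1 else a - 1 with ha'
    have hsgn1 : 0 < a ↔ 0 < a' := by rw [ha']; split <;> omega
    have hsgn2 : a < 0 ↔ a' < 0 := by rw [ha']; split <;> omega
    have habs : a'.natAbs = a.natAbs + 1 := by rw [ha']; split <;> omega
    refine ⟨by simp [phiA], ?_, ?_⟩
    · intro x hx
      simp only [phiA, List.mem_cons] at hx
      rcases hx with rfl | hx
      · omega
      · exact hnz x (by simp [hx])
    · show val (a' :: t) = d + 2
      have hsc : sc (a' :: t) = sc (a :: t) := sc_cons_sign t hsgn1.symm hsgn2.symm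
      simp only [val, absSum, List.map_cons, List.sum_cons, hsc, habs] at *
      push_cast at *
      omega

lemma phiB_mem {d : ℕ} {l : List ℤ} (h : l ∈ F d) : phiB l ∈ F (d + 2) := by
  obtain ⟨hne, hnz, hv⟩ := h
  match l, hne with
  | a :: t, _ =>
    have ha : a ≠ 0 := hnz a (by simp)
    set s : ℤ := if 0 < a then 1 else -1 with hs
    have hsa : ¬ s * a < 0 := by rw [hs, mul_neg_iff]; split <;> omega
    refine ⟨by simp [phiB], ?_, ?_⟩
    · intro x hx
      simp only [phiB, List.mem_cons] at hx
      rcases hx with rfl | hx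
      · split <;> omega
      · exact hnz x (List.mem_cons.2 hx)
    · show val (s :: a :: t) = d + 2
      rw [val_cons_cons, if_neg hsa, hv]
      have : s.natAbs = 1 := by rw [hs]; split <;> omega
      rw [this]; push_cast; ring

lemma phiC_mem {d : ℕ} {l : List ℤ} (h : l ∈ F d) : phiC l ∈ F (d + 1) := by
  obtain ⟨hne, hnz, hv⟩ := h
  match l, hne with
  | a :: t, _ =>
    have ha : a ≠ 0 := hnz a (by simp)
    set s : ℤ := if 0 < a then -1 else 1 with hs
    have hsa : s * a < 0 := by rw [hs, mul_neg_iff]; split <;> omega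
    refine ⟨by simp [phiC], ?_, ?_⟩
    · intro x hx
      simp only [phiC, List.mem_cons] at hx
      rcases hx with rfl | hx
      · split <;> omega
      · exact hnz x (List.mem_cons.2 hx)
    · show val (s :: a :: t) = d + 1
      rw [val_cons_cons, if_pos hsa, hv]
      have : s.natAbs = 1 := by rw [hs]; split <;> omega
      rw [this]; push_cast; ring

lemma F_decomp {d : ℕ} (hd : 2 ≤ d) :
    F (d + 2) ⊆ phiA '' F d ∪ phiB '' F d ∪ phiC '' F (d + 1) := by
  rintro l hl
  obtain ⟨hne, hnz, hv⟩ := hl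
  match l, hne with
  | a :: t, _ =>
    have ha : a ≠ 0 := hnz a (by simp)
    cases t with
    | nil =>
      -- singleton: 2|a| = d+2, |a| ≥ 2
      rw [val_singleton] at hv
      have habs : 2 ≤ a.natAbs := by omega
      left; left
      refine ⟨[if 0 < a then a - 1 else a + 1], ⟨by simp, ?_, ?_⟩, ?_⟩
      · intro x hx
        simp only [List.mem_singleton] at hx
        subst hx; split <;> omega
      · rw [val_singleton]
        have : (if 0 < a then a - 1 else a + 1).natAbs = a.natAbs - 1 := by
          split <;> omega
        rw [this]; push_cast; omega
      · simp only [phiA]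
        congr 1
        split <;> rename_i h <;> split <;> rename_i h2 <;> omega
    | cons b u =>
      have hb : b ≠ 0 := hnz b (by simp)
      have htnz : ∀ x ∈ b :: u, x ≠ 0 := fun x hx => hnz x (List.mem_cons.2 (Or.inr hx))
      rw [val_cons_cons] at hv
      by_cases habs : 2 ≤ a.natAbs
      · -- phiA case
        left; left
        set a' : ℤ := if 0 < a then a - 1 else a + 1 with ha'
        have ha'0 : a' ≠ 0 := by rw [ha']; split <;> omega
        have hsgn1 : 0 < a' ↔ 0 < a := by rw [ha']; split <;> omega
        have hsgn2 : a' < 0 ↔ a < 0 := by rw [ha']; split <;> omega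
        refine ⟨a' :: b :: u, ⟨by simp, ?_, ?_⟩, ?_⟩
        · intro x hx
          rcases List.mem_cons.1 hx with rfl | hx
          · exact ha'0
          · exact htnz x hx
        · rw [val_cons_cons]
          have hj : (a' * b < 0) ↔ (a * b < 0) := by
            rw [mul_neg_iff, mul_neg_iff]; tauto
          have hn : a'.natAbs = a.natAbs - 1 := by rw [ha']; split <;> omega
          rw [hn]
          simp only [hj]
          split <;> push_cast <;> [skip; skip] <;> omega
        · simp only [phiA]
          congr 1
          rw [ha']; split <;> rename_i h <;> split <;> rename_i h2 <;> omega
      · have ha1 : a.natAbs = 1 := by omega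
        by_cases hab : a * b < 0
        · -- phiC case
          right
          refine ⟨b :: u, ⟨by simp, htnz, ?_⟩, ?_⟩
          · rw [if_pos hab, ha1] at hv; push_cast at hv ⊢; omega
          · simp only [phiC]
            have : (if 0 < b then (-1 : ℤ) else 1) = a := by
              rw [mul_neg_iff] at hab
              split <;> omega
            rw [this]
        · -- phiB case
          left; right
          refine ⟨b :: u, ⟨by simp, htnz, ?_⟩, ?_⟩
          · rw [if_neg hab, ha1] at hv; push_cast at hv ⊢; omega
          · simp only [phiB]
            have : (if 0 < b then (1 : ℤ) else -1) = a := by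
              have : ¬ (0 < a ∧ b < 0 ∨ a < 0 ∧ 0 < b) := by
                rw [← mul_neg_iff]; exact hab
              split <;> omega
            rw [this]

lemma memA_shape {d : ℕ} {x : List ℤ} (h : x ∈ phiA '' F d) :
    ∃ a t, x = a :: t ∧ 2 ≤ a.natAbs := by
  obtain ⟨l, ⟨hne, hnz, _⟩, rfl⟩ := h
  match l, hne with
  | a :: t, _ =>
    have ha : a ≠ 0 := hnz a (by simp)
    exact ⟨_, t, rfl, by split <;> omega⟩

lemma memB_shape {d : ℕ} {x : List ℤ} (h : x ∈ phiB '' F d) :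
    ∃ s a t, x = s :: a :: t ∧ s.natAbs = 1 ∧ ¬ s * a < 0 := by
  obtain ⟨l, ⟨hne, hnz, _⟩, rfl⟩ := h
  match l, hne with
  | a :: t, _ =>
    have ha : a ≠ 0 := hnz a (by simp)
    refine ⟨_, a, t, rfl, by split <;> omega, ?_⟩
    rw [mul_neg_iff]
    split <;> omega

lemma memC_shape {d : ℕ} {x : List ℤ} (h : x ∈ phiC '' F d) :
    ∃ s a t, x = s :: a :: t ∧ s.natAbs = 1 ∧ s * a < 0 := by
  obtain ⟨l, ⟨hne, hnz, _⟩, rfl⟩ := h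
  match l, hne with
  | a :: t, _ =>
    have ha : a ≠ 0 := hnz a (by simp)
    refine ⟨_, a, t, rfl, by split <;> omega, ?_⟩
    rw [mul_neg_iff]
    split <;> omega

lemma injA {d : ℕ} : Set.InjOn phiA (F d) := by
  rintro l1 ⟨h1, hnz1, _⟩ l2 ⟨h2, hnz2, _⟩ heq
  match l1, l2, h1, h2 with
  | a :: t, a2 :: t2, _, _ =>
    have ha : a ≠ 0 := hnz1 a (by simp)
    have ha2 : a2 ≠ 0 := hnz2 a2 (by simp)
    simp only [phiA, List.cons.injEq] at heq
    obtain ⟨he, rfl⟩ := heq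
    have : a = a2 := by
      split at he <;> split at he <;> omega
    rw [this]

lemma injB {d : ℕ} : Set.InjOn phiB (F d) := by
  rintro l1 ⟨h1, _, _⟩ l2 ⟨h2, _, _⟩ heq
  match l1, l2, h1, h2 with
  | a :: t, a2 :: t2, _, _ =>
    simp only [phiB, List.cons.injEq] at heq
    simp [heq.2.1, heq.2.2]

lemma injC {d : ℕ} : Set.InjOn phiC (F d) := by
  rintro l1 ⟨h1, _, _⟩ l2 ⟨h2, _, _⟩ heq
  match l1, l2, h1, h2 with
  | a :: t, a2 :: t2, _, _ =>
    simp only [phiC, List.cons.injEq] at heq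
    simp [heq.2.1, heq.2.2]

lemma fc_rec {d : ℕ} (hd : 2 ≤ d) : fc (d + 2) = fc (d + 1) + 2 * fc d := by
  have hEq : F (d + 2) = phiA '' F d ∪ phiB '' F d ∪ phiC '' F (d + 1) := by
    apply Set.Subset.antisymm (F_decomp hd)
    rintro x ((⟨l, hl, rfl⟩ | ⟨l, hl, rfl⟩) | ⟨l, hl, rfl⟩)
    · exact phiA_mem hl
    · exact phiB_mem hl
    · exact phiC_mem hl
  have hA : (phiA '' F d).Finite := (F_finite d).image _
  have hB : (phiB '' F d).Finite := (F_finite d).image _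
  have hC : (phiC '' F (d + 1)).Finite := (F_finite (d + 1)).image _
  have hdAB : Disjoint (phiA '' F d) (phiB '' F d) := by
    rw [Set.disjoint_left]
    intro x hx hx'
    obtain ⟨a, t, rfl, h2⟩ := memA_shape hx
    obtain ⟨s, a2, t2, heq, hs, _⟩ := memB_shape hx'
    simp only [List.cons.injEq] at heq
    omega
  have hdAC : Disjoint (phiA '' F d) (phiC '' F (d + 1)) := by
    rw [Set.disjoint_left]
    intro x hx hx'
    obtain ⟨a, t, rfl, h2⟩ := memA_shape hx
    obtain ⟨s, a2, t2, heq, hs, _⟩ := memC_shape hx'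
    simp only [List.cons.injEq] at heq
    omega
  have hdBC : Disjoint (phiB '' F d) (phiC '' F (d + 1)) := by
    rw [Set.disjoint_left]
    intro x hx hx'
    obtain ⟨s, a, t, rfl, hs, hsa⟩ := memB_shape hx
    obtain ⟨s2, a2, t2, heq, hs2, hsa2⟩ := memC_shape hx'
    simp only [List.cons.injEq] at heq
    obtain ⟨rfl, rfl, rfl⟩ := heq
    exact hsa hsa2
  rw [fc, hEq, Set.ncard_union_eq (by exact Set.disjoint_union_left.2 ⟨hdAC, hdBC⟩)
    (hA.union hB) hC, Set.ncard_union_eq hdAB hA hB]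
  rw [Set.ncard_image_of_injOn injA, Set.ncard_image_of_injOn injB,
    Set.ncard_image_of_injOn injC]
  show fc d + fc d + fc (d+1) = fc (d+1) + 2 * fc d
  ring

lemma fc_formula (d : ℕ) (hd : 2 ≤ d) :
    3 * (fc d : ℤ) = 2 * (2 ^ (d - 1) - (-1 : ℤ) ^ (d - 1)) := by
  induction d using Nat.strong_induction_on with
  | _ d ih =>
    rcases Nat.lt_or_ge d 4 with h4 | h4
    · interval_cases d
      · rw [fc_two]; norm_num
      · rw [fc_three]; norm_num
    · obtain ⟨k, rfl⟩ := Nat.exists_eq_add_of_le h4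
      have h1 := ih (3 + k) (by omega) (by omega)
      have h2 := ih (2 + k) (by omega) (by omega)
      have hr : fc (2 + k + 2) = fc (2 + k + 1) + 2 * fc (2 + k) := fc_rec (by omega)
      have e0 : 4 + k = 2 + k + 2 := by omega
      have e1 : 3 + k = 2 + k + 1 := by omega
      rw [e0, hr, ← e1]
      have e2 : 2 + k + 2 - 1 = k + 3 := by omega
      have e3 : 3 + k - 1 = k + 2 := by omega
      have e4 : 2 + k - 1 = k + 1 := by omega
      rw [e2]
      rw [e3] at h1
      rw [e4] at h2
      push_cast
      linear_combination h1 + 2 * h2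


lemma headD_reverse (l : List ℤ) (d : ℤ) : l.reverse.headD d = l.getLastD d := by
  have := getLastD_reverse l.reverse d
  simpa using this.symm

lemma pal_decomp {l : List ℤ} (hp : l.reverse = l) (he : Even l.length) :
    l = l.take (l.length / 2) ++ (l.take (l.length / 2)).reverse := by
  set m := l.length / 2 with hm
  have hlen : l.length = m + m := by
    obtain ⟨r, hr⟩ := he; omega
  have h1 : l.take m ++ l.drop m = l := List.take_append_drop m l
  have h2 : (l.drop m).reverse ++ (l.take m).reverse = l.take m ++ l.drop m := by
    rw [← List.reverse_append, h1, hp, ← h1]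
  have hlt : (l.drop m).reverse.length = (l.take m).length := by
    simp; omega
  have h3 := List.append_inj h2 hlt
  have h4 : l.drop m = (l.take m).reverse := by
    rw [← h3.1, List.reverse_reverse]
  conv_lhs => rw [← h1, h4]

lemma anti_decomp {l : List ℤ} (hp : l.reverse = l.map (fun x => -x))
    (he : Even l.length) :
    l = l.take (l.length / 2) ++ ((l.take (l.length / 2)).reverse.map (fun x => -x)) := by
  set m := l.length / 2 with hm
  have hlen : l.length = m + m := by
    obtain ⟨r, hr⟩ := he; omega
  have h1 : l.take m ++ l.drop m = l := List.take_append_drop m l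
  have h2 : (l.drop m).reverse ++ (l.take m).reverse
      = (l.take m).map (fun x => -x) ++ (l.drop m).map (fun x => -x) := by
    have e1 : (l.drop m).reverse ++ (l.take m).reverse = l.reverse := by
      rw [← List.reverse_append, h1]
    rw [e1, hp]
    conv_lhs => rw [← h1]
    rw [List.map_append]
  have hlt : (l.drop m).reverse.length = ((l.take m).map (fun x => -x)).length := by
    simp; omega
  have h3 := List.append_inj h2 hlt
  have h4 : l.drop m = (l.take m).reverse.map (fun x => -x) := by
    rw [List.map_reverse]
    exact List.reverse_eq_iff.mp h3.1
  conv_lhs => rw [← h1, h4]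

lemma val_pal {h : List ℤ} (hne : h ≠ []) : val (h ++ h.reverse) = 2 * val h := by
  have hrne : h.reverse ≠ [] := by simpa using hne
  have hsc := sc_append h h.reverse hne hrne
  rw [headD_reverse, sc_reverse] at hsc
  have hj : ¬ (h.getLastD 1 * h.getLastD 1 < 0) := by
    have := mul_self_nonneg (h.getLastD 1); omega
  rw [if_neg hj] at hsc
  simp only [val, absSum_append, absSum_reverse, hsc]
  push_cast; ring

lemma getLastD_mem {h : List ℤ} (hne : h ≠ []) : h.getLastD 1 ∈ h := by
  cases h with
  | nil => simp at hne
  | cons a t =>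
    rw [List.getLastD_cons]
    exact List.getLastD_mem_cons

lemma val_anti {h : List ℤ} (hne : h ≠ []) (hnz : ∀ x ∈ h, x ≠ 0) :
    val (h ++ h.reverse.map (fun x => -x)) = 2 * val h - 1 := by
  have hrne : h.reverse.map (fun x => -x) ≠ [] := by simpa using hne
  have hsc := sc_append h (h.reverse.map (fun x => -x)) hne hrne
  have hhead : (h.reverse.map (fun x => -x)).headD 1 = - (h.getLastD 1) := by
    rw [← headD_reverse]
    cases hr : h.reverse with
    | nil => exact absurd (List.reverse_eq_nil_iff.mp hr) hne
    | cons x xs => simp [hr]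
  have hlast0 : h.getLastD 1 ≠ 0 := hnz _ (getLastD_mem hne)
  have hpos : 0 < h.getLastD 1 * h.getLastD 1 := mul_self_pos.mpr hlast0
  have hj : h.getLastD 1 * ((h.reverse.map (fun x => -x)).headD 1) < 0 := by
    rw [hhead, mul_neg]; omega
  rw [if_pos hj, sc_map_neg, sc_reverse] at hsc
  simp only [val, absSum_append, absSum_map_neg, absSum_reverse, hsc]
  push_cast; ring

lemma val_sc (l : List ℤ) : (2 * absSum l : ℤ) - signChanges l = val l := by
  rw [sc_eq, val]

lemma take_ne_nil {l : List ℤ} (hne : l ≠ []) (he : Even l.length) :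
    l.take (l.length / 2) ≠ [] := by
  intro hcon
  have h0 : l.length ≠ 0 := fun h => hne (List.length_eq_zero_iff.mp h)
  have h1 := congrArg List.length hcon
  rw [List.length_take] at h1
  simp only [List.length_nil] at h1
  obtain ⟨r, hr⟩ := he
  omega

lemma epTot_even (n : ℕ) (hn : 1 ≤ n) : epTot (2 * n) = fc n := by
  have hset : Ecross (2 * n) ∩ {l | IsPalOrAnti l}
      = (fun h => h ++ h.reverse) '' F n := by
    ext l
    constructor
    · rintro ⟨⟨⟨hne, heven, hnz⟩, hval⟩, hpal⟩
      rw [val_sc] at hval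
      have hhne := take_ne_nil hne heven
      have hhnz : ∀ x ∈ l.take (l.length / 2), x ≠ 0 :=
        fun x hx => hnz x (List.take_subset _ l hx)
      rcases hpal with hp | ha
      · have hd := pal_decomp hp heven
        have hv2 := val_pal hhne
        rw [← hd] at hv2
        refine ⟨l.take (l.length / 2), ⟨hhne, hhnz, ?_⟩, hd.symm⟩
        rw [hval] at hv2
        obtain ⟨vt, hvt⟩ : ∃ v : ℤ, val (l.take (l.length / 2)) = v := ⟨_, rfl⟩
        rw [hvt] at hv2 ⊢
        push_cast at hv2 ⊢
        omega
      · exfalso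
        have hd := anti_decomp ha heven
        have hv2 := val_anti hhne hhnz
        rw [← hd] at hv2
        rw [hval] at hv2
        obtain ⟨vt, hvt⟩ : ∃ v : ℤ, val (l.take (l.length / 2)) = v := ⟨_, rfl⟩
        rw [hvt] at hv2
        push_cast at hv2
        omega
    · rintro ⟨h, ⟨hne, hnz, hv⟩, rfl⟩
      refine ⟨⟨⟨by simp [hne], ⟨h.length, by simp⟩, ?_⟩, ?_⟩, Or.inl ?_⟩
      · intro x hx
        rcases List.mem_append.1 hx with hx | hx
        · exact hnz x hx
        · exact hnz x (List.mem_reverse.1 hx)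
      · rw [val_sc, val_pal hne, hv]; push_cast; ring
      · simp
  have hinj : Set.InjOn (fun h : List ℤ => h ++ h.reverse) (F n) := by
    intro l1 _ l2 _ heq
    simp only at heq
    have hlen : l1.length = l2.length := by
      have := congrArg List.length heq
      simp at this
      omega
    exact (List.append_inj heq hlen).1
  rw [epTot, hset, Set.ncard_image_of_injOn hinj, fc]

lemma epTot_odd (n : ℕ) (hn : 1 ≤ n) : epTot (2 * n + 1) = fc (n + 1) := by
  have hset : Ecross (2 * n + 1) ∩ {l | IsPalOrAnti l}
      = (fun h => h ++ h.reverse.map (fun x => -x)) '' F (n + 1) := by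
    ext l
    constructor
    · rintro ⟨⟨⟨hne, heven, hnz⟩, hval⟩, hpal⟩
      rw [val_sc] at hval
      have hhne := take_ne_nil hne heven
      have hhnz : ∀ x ∈ l.take (l.length / 2), x ≠ 0 :=
        fun x hx => hnz x (List.take_subset _ l hx)
      rcases hpal with hp | ha
      · exfalso
        have hd := pal_decomp hp heven
        have hv2 := val_pal hhne
        rw [← hd] at hv2
        rw [hval] at hv2
        obtain ⟨vt, hvt⟩ : ∃ v : ℤ, val (l.take (l.length / 2)) = v := ⟨_, rfl⟩
        rw [hvt] at hv2
        push_cast at hv2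
        omega
      · have hd := anti_decomp ha heven
        have hv2 := val_anti hhne hhnz
        rw [← hd] at hv2
        refine ⟨l.take (l.length / 2), ⟨hhne, hhnz, ?_⟩, hd.symm⟩
        rw [hval] at hv2
        obtain ⟨vt, hvt⟩ : ∃ v : ℤ, val (l.take (l.length / 2)) = v := ⟨_, rfl⟩
        rw [hvt] at hv2 ⊢
        push_cast at hv2 ⊢
        omega
    · rintro ⟨h, ⟨hne, hnz, hv⟩, rfl⟩
      refine ⟨⟨⟨by simp [hne], ⟨h.length, by simp⟩, ?_⟩, ?_⟩, Or.inr ?_⟩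
      · intro x hx
        rcases List.mem_append.1 hx with hx | hx
        · exact hnz x hx
        · simp only [List.mem_map, List.mem_reverse] at hx
          obtain ⟨y, hy, rfl⟩ := hx
          simpa using hnz y hy
      · rw [val_sc, val_anti hne hnz, hv]; push_cast; ring
      · simp [List.reverse_append, List.map_reverse, List.map_map, Function.comp]
  have hinj : Set.InjOn (fun h : List ℤ => h ++ h.reverse.map (fun x => -x)) (F (n + 1)) := by
    intro l1 _ l2 _ heq
    simp only at heq
    have hlen : l1.length = l2.length := by
      have := congrArg List.length heq
      simp at this
      omega
    exact (List.append_inj heq hlen).1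
  rw [epTot, hset, Set.ncard_image_of_injOn hinj, fc]

theorem epTot_closed_formula (c : ℕ) (hc : 3 ≤ c) :
    (3 : ℤ) * epTot c = 2 * (2 ^ ((c - 1) / 2) - (-1 : ℤ) ^ ((c - 1) / 2)) := by
  rcases Nat.even_or_odd c with ⟨n, rfl⟩ | ⟨n, rfl⟩
  · have hn : 2 ≤ n := by omega
    have h1 : n + n = 2 * n := by ring
    rw [h1, epTot_even n (by omega)]
    have h2 : (2 * n - 1) / 2 = n - 1 := by omega
    rw [h2]
    exact fc_formula n (by omega)
  · have hn : 1 ≤ n := by omega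
    rw [epTot_odd n hn]
    have h2 : (2 * n + 1 - 1) / 2 = n := by omega
    rw [h2]
    have := fc_formula (n + 1) (by omega)
    simpa using this
end

section
/- Define tbi(c) = Σ_b b·e(c,b) (sum over 2 ≤ b ≤ ⌈(c+1)/2⌉). For c ≥ 6, tbi(c) = 3·tbi(c−2) + 2·tbi(c−3) + 2^{c−3}. -/
open Classical

/-- The total braid index: the sum of `b * e(c,b)` over all braid indices `b`. -/
noncomputable def tbi (c : ℕ) : ℕ := ∑ b ∈ Finset.Icc 2 ((c + 2) / 2), b * e c b

lemma absSum_cons (a : ℤ) (t : List ℤ) : absSum (a :: t) = a.natAbs + absSum t := by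
  simp [absSum]
lemma signChanges_single (a : ℤ) : signChanges [a] = 0 := rfl
lemma signChanges_cons₂ (a b : ℤ) (t : List ℤ) :
    signChanges (a :: b :: t) = (if a * b < 0 then 1 else 0) + signChanges (b :: t) := by
  simp only [signChanges, List.tail_cons, List.zip, List.zipWith, List.filter_cons]
  by_cases h : a * b < 0 <;> simp [h, Nat.add_comm]

def bump (a : ℤ) : ℤ := if 0 < a then a + 1 else a - 1
def dec1 (a : ℤ) : ℤ := if 0 < a then a - 1 else a + 1
def inc : List ℤ → List ℤ
  | [] => []
  | a :: t => bump a :: t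
def sgn (t : List ℤ) : ℤ := if 0 < t.head! then 1 else -1
def cons0 (t : List ℤ) : List ℤ := sgn t :: t
def cons1 (t : List ℤ) : List ℤ := (-sgn t) :: t

lemma mul_neg_iff_sign {a a' : ℤ} (b : ℤ) (h : 0 < a ↔ 0 < a') (ha : a ≠ 0) (ha' : a' ≠ 0) :
    (a * b < 0 ↔ a' * b < 0) := by
  rw [mul_neg_iff, mul_neg_iff]; omega

lemma bump_ne {a : ℤ} (ha : a ≠ 0) : bump a ≠ 0 := by unfold bump; split <;> omega
lemma bump_natAbs {a : ℤ} (ha : a ≠ 0) : (bump a).natAbs = a.natAbs + 1 := by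
  unfold bump; split <;> omega
lemma bump_pos_iff (a : ℤ) : 0 < bump a ↔ 0 < a := by unfold bump; split <;> omega
lemma bump_inj {a a' : ℤ} (h : bump a = bump a') : a = a' := by
  unfold bump at h; split at h <;> split at h <;> omega
lemma dec_ne {a : ℤ} (ha : 2 ≤ a.natAbs) : dec1 a ≠ 0 := by unfold dec1; split <;> omega
lemma dec_natAbs {a : ℤ} (ha : 2 ≤ a.natAbs) : (dec1 a).natAbs = a.natAbs - 1 := by
  unfold dec1; split <;> omega
lemma dec_pos_iff {a : ℤ} (ha : 2 ≤ a.natAbs) : (0 < dec1 a ↔ 0 < a) := by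
  unfold dec1; split <;> omega
lemma bump_dec {a : ℤ} (ha : 2 ≤ a.natAbs) : bump (dec1 a) = a := by
  unfold bump dec1; split <;> split <;> omega

lemma sc_congr {a a' : ℤ} (t : List ℤ) (h : 0 < a ↔ 0 < a') (ha : a ≠ 0) (ha' : a' ≠ 0)
    (ht : ∀ x ∈ t, x ≠ 0) : signChanges (a :: t) = signChanges (a' :: t) := by
  cases t with
  | nil => rfl
  | cons b t' =>
    rw [signChanges_cons₂, signChanges_cons₂]
    congr 1
    simp only [mul_neg_iff_sign b h ha ha']

lemma sgn_cons (b : ℤ) (t' : List ℤ) : sgn (b :: t') = if 0 < b then 1 else -1 := rfl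
lemma sgn_ne (t : List ℤ) : sgn t ≠ 0 := by unfold sgn; split <;> omega
lemma sgn_natAbs (t : List ℤ) : (sgn t).natAbs = 1 := by unfold sgn; split <;> rfl
lemma sgn_mul_not_neg {b : ℤ} (t' : List ℤ) (hb : b ≠ 0) : ¬ (sgn (b :: t') * b < 0) := by
  rw [sgn_cons]; split <;> [skip; skip] <;> rw [mul_neg_iff] <;> omega
lemma neg_sgn_mul_neg {b : ℤ} (t' : List ℤ) (hb : b ≠ 0) : (-sgn (b :: t')) * b < 0 := by
  rw [sgn_cons]; split <;> [skip; skip] <;> rw [mul_neg_iff] <;> omega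
lemma eq_sgn_of_pos {a b : ℤ} (t' : List ℤ) (ha : a.natAbs = 1) (h : ¬ (a * b < 0))
    (hb : b ≠ 0) : a = sgn (b :: t') := by
  rw [sgn_cons]
  have h2 : ¬ (0 < a ∧ b < 0 ∨ a < 0 ∧ 0 < b) := by rw [← mul_neg_iff]; exact h
  split <;> omega
lemma eq_neg_sgn_of_neg {a b : ℤ} (t' : List ℤ) (ha : a.natAbs = 1) (h : a * b < 0) :
    a = -sgn (b :: t') := by
  rw [sgn_cons]
  rw [mul_neg_iff] at h
  split <;> omega

def Aset (S L : ℕ) : Set (List ℤ) :=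
  {l | Even l.length ∧ (∀ x ∈ l, x ≠ 0) ∧ absSum l = S ∧ signChanges l = L}
def Bset (S L : ℕ) : Set (List ℤ) :=
  {l | Odd l.length ∧ (∀ x ∈ l, x ≠ 0) ∧ absSum l = S ∧ signChanges l = L}

lemma ne_nil_of_mem_Aset {S L : ℕ} {l : List ℤ} (h : l ∈ Aset S L) (hS : 1 ≤ S) : l ≠ [] := by
  rintro rfl; obtain ⟨-, -, h2, -⟩ := h; simp [absSum] at h2; omega

lemma ne_nil_of_mem_Bset {S L : ℕ} {l : List ℤ} (h : l ∈ Bset S L) : l ≠ [] := by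
  rintro rfl; obtain ⟨h1, -⟩ := h; simp at h1

lemma Aset_decomp (S L : ℕ) (hS : 2 ≤ S) :
    Aset S L = inc '' Aset (S-1) L ∪ cons0 '' Bset (S-1) L ∪
      (if L = 0 then ∅ else cons1 '' Bset (S-1) (L-1)) := by
  ext l
  constructor
  · rintro ⟨he, hnz, hs, hc⟩
    match l, he with
    | [], _ => exfalso; simp [absSum] at hs; omega
    | [a], he => exfalso; simp at he
    | a :: b :: t', he =>
      have ha : a ≠ 0 := hnz a (by simp)
      have hb : b ≠ 0 := hnz b (by simp)
      have hnz' : ∀ x ∈ b :: t', x ≠ 0 := fun x hx => hnz x (by simp [hx])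
      have ha1 : 1 ≤ a.natAbs := by omega
      rw [absSum_cons] at hs
      rw [signChanges_cons₂] at hc
      have he' : Even t'.length := by simpa [Nat.even_add_one, parity_simps] using he
      rcases Nat.lt_or_ge a.natAbs 2 with h2 | h2
      · -- |a| = 1
        have ha1' : a.natAbs = 1 := by omega
        by_cases hab : a * b < 0
        · -- sign change : cons1 case
          rw [if_pos hab] at hc
          have hL : 1 ≤ L := by omega
          rw [if_neg (by omega)]
          refine Or.inr ⟨b :: t', ⟨?_, hnz', by omega, by omega⟩, ?_⟩
          · simpa using he'.add_one
          · show (-sgn (b :: t')) :: b :: t' = a :: b :: t'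
            rw [← eq_neg_sgn_of_neg t' ha1' hab]
        · rw [if_neg hab] at hc
          refine Or.inl (Or.inr ⟨b :: t', ⟨?_, hnz', by omega, by omega⟩, ?_⟩)
          · simpa using he'.add_one
          · show sgn (b :: t') :: b :: t' = a :: b :: t'
            rw [← eq_sgn_of_pos t' ha1' hab hb]
      · -- |a| ≥ 2 : inc case
        refine Or.inl (Or.inl ⟨dec1 a :: b :: t', ⟨by simpa using he, ?_, ?_, ?_⟩, ?_⟩)
        · intro x hx
          rcases List.mem_cons.1 hx with rfl | hx
          · exact dec_ne h2
          · exact hnz' x hx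
        · rw [absSum_cons, dec_natAbs h2]; omega
        · rw [← hc, ← signChanges_cons₂]
          exact sc_congr _ (dec_pos_iff h2) (dec_ne h2) ha hnz'
        · show bump (dec1 a) :: b :: t' = a :: b :: t'
          rw [bump_dec h2]
  · intro hl
    rcases hl with (⟨m, hm, rfl⟩ | ⟨m, hm, rfl⟩) | hl
    · -- inc image
      obtain ⟨he, hnz, hs, hc⟩ := hm
      match m, he, hnz, hs, hc with
      | [], he, hnz, hs, hc => exfalso; simp [absSum] at hs; omega
      | a :: t, he, hnz, hs, hc =>
        have ha : a ≠ 0 := hnz a (by simp)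
        have hnz' : ∀ x ∈ t, x ≠ 0 := fun x hx => hnz x (by simp [hx])
        refine ⟨by simpa [inc] using he, ?_, ?_, ?_⟩
        · intro x hx
          rcases List.mem_cons.1 hx with rfl | hx
          · exact bump_ne ha
          · exact hnz' x hx
        · show absSum (bump a :: t) = S
          rw [absSum_cons, bump_natAbs ha]; rw [absSum_cons] at hs; omega
        · show signChanges (bump a :: t) = L
          rw [← hc]
          exact sc_congr _ (bump_pos_iff a) (bump_ne ha) ha hnz'
    · -- cons0 image
      obtain ⟨ho, hnz, hs, hc⟩ := hm
      match m, ho, hnz, hs, hc with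
      | b :: t', ho, hnz, hs, hc =>
        have hb : b ≠ 0 := hnz b (by simp)
        change sgn (b :: t') :: b :: t' ∈ Aset S L
        refine ⟨by simpa using ho.add_one, ?_, ?_, ?_⟩
        · intro x hx
          rcases List.mem_cons.1 hx with rfl | hx
          · exact sgn_ne _
          · exact hnz x hx
        · show absSum (sgn (b :: t') :: b :: t') = S
          rw [absSum_cons, sgn_natAbs]; omega
        · show signChanges (sgn (b :: t') :: b :: t') = L
          rw [signChanges_cons₂, if_neg (sgn_mul_not_neg t' hb), hc]
          omega
    · -- cons1 image
      rcases Nat.eq_zero_or_pos L with rfl | hL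
      · simp at hl
      rw [if_neg (by omega)] at hl
      obtain ⟨m, hm, rfl⟩ := hl
      obtain ⟨ho, hnz, hs, hc⟩ := hm
      match m, ho, hnz, hs, hc with
      | b :: t', ho, hnz, hs, hc =>
        have hb : b ≠ 0 := hnz b (by simp)
        change (-sgn (b :: t')) :: b :: t' ∈ Aset S L
        refine ⟨by simpa using ho.add_one, ?_, ?_, ?_⟩
        · intro x hx
          rcases List.mem_cons.1 hx with rfl | hx
          · simpa using sgn_ne (b :: t')
          · exact hnz x hx
        · show absSum (-sgn (b :: t') :: b :: t') = S
          rw [absSum_cons]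
          simp only [Int.natAbs_neg, sgn_natAbs]; omega
        · show signChanges (-sgn (b :: t') :: b :: t') = L
          rw [signChanges_cons₂, if_pos (neg_sgn_mul_neg t' hb), hc]; omega

lemma Bset_decomp (S L : ℕ) (hS : 2 ≤ S) :
    Bset S L = inc '' Bset (S-1) L ∪ cons0 '' Aset (S-1) L ∪
      (if L = 0 then ∅ else cons1 '' Aset (S-1) (L-1)) := by
  ext l
  constructor
  · rintro ⟨ho, hnz, hs, hc⟩
    match l, ho with
    | [], ho => exfalso; simp at ho
    | [a], ho =>
      have ha : a ≠ 0 := hnz a (by simp)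
      have h2 : 2 ≤ a.natAbs := by
        have : absSum [a] = a.natAbs := by simp [absSum]
        omega
      refine Or.inl (Or.inl ⟨[dec1 a], ⟨by simp, ?_, ?_, ?_⟩, ?_⟩)
      · intro x hx
        rcases List.mem_singleton.1 hx with rfl
        exact dec_ne h2
      · rw [absSum_cons] at hs ⊢; rw [dec_natAbs h2]
        simp [absSum] at hs ⊢; omega
      · rw [signChanges_single] at hc ⊢; omega
      · show bump (dec1 a) :: [] = [a]
        rw [bump_dec h2]
    | a :: b :: t', ho =>
      have ha : a ≠ 0 := hnz a (by simp)
      have hb : b ≠ 0 := hnz b (by simp)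
      have hnz' : ∀ x ∈ b :: t', x ≠ 0 := fun x hx => hnz x (by simp [hx])
      have ha1 : 1 ≤ a.natAbs := by omega
      rw [absSum_cons] at hs
      rw [signChanges_cons₂] at hc
      have ho' : Odd t'.length := by simpa [Nat.even_add_one, parity_simps] using ho
      rcases Nat.lt_or_ge a.natAbs 2 with h2 | h2
      · have ha1' : a.natAbs = 1 := by omega
        by_cases hab : a * b < 0
        · rw [if_pos hab] at hc
          have hL : 1 ≤ L := by omega
          rw [if_neg (by omega)]
          refine Or.inr ⟨b :: t', ⟨?_, hnz', by omega, by omega⟩, ?_⟩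
          · simpa [Nat.even_add_one] using ho'
          · show (-sgn (b :: t')) :: b :: t' = a :: b :: t'
            rw [← eq_neg_sgn_of_neg t' ha1' hab]
        · rw [if_neg hab] at hc
          refine Or.inl (Or.inr ⟨b :: t', ⟨?_, hnz', by omega, by omega⟩, ?_⟩)
          · simpa [Nat.even_add_one] using ho'
          · show sgn (b :: t') :: b :: t' = a :: b :: t'
            rw [← eq_sgn_of_pos t' ha1' hab hb]
      · refine Or.inl (Or.inl ⟨dec1 a :: b :: t', ⟨by simpa using ho, ?_, ?_, ?_⟩, ?_⟩)
        · intro x hx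
          rcases List.mem_cons.1 hx with rfl | hx
          · exact dec_ne h2
          · exact hnz' x hx
        · rw [absSum_cons, dec_natAbs h2]; omega
        · rw [← hc, ← signChanges_cons₂]
          exact sc_congr _ (dec_pos_iff h2) (dec_ne h2) ha hnz'
        · show bump (dec1 a) :: b :: t' = a :: b :: t'
          rw [bump_dec h2]
  · intro hl
    rcases hl with (⟨m, hm, rfl⟩ | ⟨m, hm, rfl⟩) | hl
    · obtain ⟨ho, hnz, hs, hc⟩ := hm
      match m, ho, hnz, hs, hc with
      | a :: t, ho, hnz, hs, hc =>
        have ha : a ≠ 0 := hnz a (by simp)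
        have hnz' : ∀ x ∈ t, x ≠ 0 := fun x hx => hnz x (by simp [hx])
        refine ⟨by simpa [inc] using ho, ?_, ?_, ?_⟩
        · intro x hx
          rcases List.mem_cons.1 hx with rfl | hx
          · exact bump_ne ha
          · exact hnz' x hx
        · show absSum (bump a :: t) = S
          rw [absSum_cons, bump_natAbs ha]; rw [absSum_cons] at hs; omega
        · show signChanges (bump a :: t) = L
          rw [← hc]
          exact sc_congr _ (bump_pos_iff a) (bump_ne ha) ha hnz'
    · obtain ⟨he, hnz, hs, hc⟩ := hm
      have hm_ne : m ≠ [] := by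
        rintro rfl; simp [absSum] at hs; omega
      match m, hm_ne, he, hnz, hs, hc with
      | b :: t', _, he, hnz, hs, hc =>
        have hb : b ≠ 0 := hnz b (by simp)
        change sgn (b :: t') :: b :: t' ∈ Bset S L
        refine ⟨by simpa using he.add_one, ?_, ?_, ?_⟩
        · intro x hx
          rcases List.mem_cons.1 hx with rfl | hx
          · exact sgn_ne _
          · exact hnz x hx
        · show absSum (sgn (b :: t') :: b :: t') = S
          rw [absSum_cons, sgn_natAbs]; omega
        · show signChanges (sgn (b :: t') :: b :: t') = L
          rw [signChanges_cons₂, if_neg (sgn_mul_not_neg t' hb), hc]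
          omega
    · rcases Nat.eq_zero_or_pos L with rfl | hL
      · simp at hl
      rw [if_neg (by omega)] at hl
      obtain ⟨m, hm, rfl⟩ := hl
      obtain ⟨he, hnz, hs, hc⟩ := hm
      have hm_ne : m ≠ [] := by
        rintro rfl; simp [absSum] at hs; omega
      match m, hm_ne, he, hnz, hs, hc with
      | b :: t', _, he, hnz, hs, hc =>
        have hb : b ≠ 0 := hnz b (by simp)
        change (-sgn (b :: t')) :: b :: t' ∈ Bset S L
        refine ⟨by simpa using he.add_one, ?_, ?_, ?_⟩
        · intro x hx
          rcases List.mem_cons.1 hx with rfl | hx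
          · simpa using sgn_ne (b :: t')
          · exact hnz x hx
        · show absSum (-sgn (b :: t') :: b :: t') = S
          rw [absSum_cons]
          simp only [Int.natAbs_neg, sgn_natAbs]; omega
        · show signChanges (-sgn (b :: t') :: b :: t') = L
          rw [signChanges_cons₂, if_pos (neg_sgn_mul_neg t' hb), hc]; omega

lemma finite_absSum : ∀ S : ℕ, {l : List ℤ | (∀ x ∈ l, x ≠ 0) ∧ absSum l = S}.Finite := by
  intro S
  induction S using Nat.strong_induction_on with
  | _ S ih =>
  rcases Nat.eq_zero_or_pos S with rfl | hS
  · apply Set.Finite.subset (Set.finite_singleton ([] : List ℤ))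
    rintro l ⟨h1, h2⟩
    cases l with
    | nil => simp
    | cons a t =>
      exfalso
      have : a ≠ 0 := h1 a (by simp)
      have : 1 ≤ a.natAbs := by have := Int.natAbs_eq_zero.not.2 this; omega
      rw [absSum_cons] at h2; omega
  · have hfin : (↑((Finset.Icc (-(S:ℤ)) S).erase 0) : Set ℤ).Finite := Finset.finite_toSet _
    apply Set.Finite.subset (Set.Finite.biUnion hfin
      (fun a (ha : a ∈ _) =>
        Set.Finite.image (a :: ·) (ih (S - a.natAbs) (by
          have ha' : a ≠ 0 := by
            simp only [Finset.coe_erase, Set.mem_diff, Set.mem_singleton_iff] at ha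
            exact ha.2
          have : 1 ≤ a.natAbs := by have := Int.natAbs_eq_zero.not.2 ha'; omega
          omega))))
    rintro l ⟨h1, h2⟩
    cases l with
    | nil => exfalso; simp [absSum] at h2; omega
    | cons a t =>
      have ha : a ≠ 0 := h1 a (by simp)
      have h1' : ∀ x ∈ t, x ≠ 0 := fun x hx => h1 x (by simp [hx])
      rw [absSum_cons] at h2
      refine Set.mem_biUnion (show a ∈ _ from ?_) ?_
      · simp only [Finset.coe_erase, Set.mem_diff, Finset.coe_Icc, Set.mem_Icc,
          Set.mem_singleton_iff]
        exact ⟨⟨by omega, by omega⟩, ha⟩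
      · exact ⟨t, ⟨h1', by omega⟩, rfl⟩

lemma Aset_finite (S L : ℕ) : (Aset S L).Finite :=
  (finite_absSum S).subset (fun l hl => ⟨hl.2.1, hl.2.2.1⟩)
lemma Bset_finite (S L : ℕ) : (Bset S L).Finite :=
  (finite_absSum S).subset (fun l hl => ⟨hl.2.1, hl.2.2.1⟩)

noncomputable def fA (S L : ℕ) : ℕ := (Aset S L).ncard
noncomputable def gB (S L : ℕ) : ℕ := (Bset S L).ncard

lemma inc_injOn_A (S L : ℕ) (hS : 1 ≤ S) : Set.InjOn inc (Aset S L) := by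
  intro l1 h1 l2 h2 h
  match l1, ne_nil_of_mem_Aset h1 hS, l2, ne_nil_of_mem_Aset h2 hS with
  | a :: t, _, a' :: t', _ =>
    simp only [inc, List.cons.injEq] at h
    exact by rw [bump_inj h.1, h.2]

lemma inc_injOn_B (S L : ℕ) : Set.InjOn inc (Bset S L) := by
  intro l1 h1 l2 h2 h
  match l1, ne_nil_of_mem_Bset h1, l2, ne_nil_of_mem_Bset h2 with
  | a :: t, _, a' :: t', _ =>
    simp only [inc, List.cons.injEq] at h
    exact by rw [bump_inj h.1, h.2]

lemma cons0_inj : Function.Injective cons0 := by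
  intro t t' h
  simpa [cons0] using congrArg List.tail h

lemma cons1_inj : Function.Injective cons1 := by
  intro t t' h
  simpa [cons1] using congrArg List.tail h

lemma head_inc_natAbs {m : List ℤ} (hm : m ≠ []) (hnz : ∀ x ∈ m, x ≠ 0) :
    2 ≤ (inc m).head!.natAbs := by
  match m, hm with
  | a :: t, _ =>
    have ha : a ≠ 0 := hnz a (by simp)
    show 2 ≤ (bump a).natAbs
    rw [bump_natAbs ha]
    have := Int.natAbs_eq_zero.not.2 ha; omega

lemma disj_inc_cons0 {X Y : Set (List ℤ)} (hX : ∀ l ∈ X, l ≠ [] ∧ ∀ x ∈ l, x ≠ 0) :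
    Disjoint (inc '' X) (cons0 '' Y) := by
  rw [Set.disjoint_left]
  rintro l ⟨m, hm, rfl⟩ ⟨m', hm', h⟩
  have h1 := head_inc_natAbs (hX m hm).1 (hX m hm).2
  rw [← h] at h1
  have := sgn_natAbs m'
  simp only [cons0, List.head!] at h1
  omega

lemma disj_inc_cons1 {X Y : Set (List ℤ)} (hX : ∀ l ∈ X, l ≠ [] ∧ ∀ x ∈ l, x ≠ 0) :
    Disjoint (inc '' X) (cons1 '' Y) := by
  rw [Set.disjoint_left]
  rintro l ⟨m, hm, rfl⟩ ⟨m', hm', h⟩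
  have h1 := head_inc_natAbs (hX m hm).1 (hX m hm).2
  rw [← h] at h1
  have := sgn_natAbs m'
  simp only [cons1, List.head!, Int.natAbs_neg] at h1
  omega

lemma disj_cons0_cons1 (Y Y' : Set (List ℤ)) : Disjoint (cons0 '' Y) (cons1 '' Y') := by
  rw [Set.disjoint_left]
  rintro l ⟨m, hm, rfl⟩ ⟨m', hm', h⟩
  simp only [cons0, cons1, List.cons.injEq] at h
  obtain ⟨h1, rfl⟩ := h
  have := sgn_ne m'; omega

lemma fA_rec (S L : ℕ) (hS : 2 ≤ S) :
    fA S L = fA (S-1) L + gB (S-1) L + (if L = 0 then 0 else gB (S-1) (L-1)) := by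
  have hS1 : 1 ≤ S - 1 := by omega
  have hXA : ∀ l ∈ Aset (S-1) L, l ≠ [] ∧ ∀ x ∈ l, x ≠ 0 :=
    fun l hl => ⟨ne_nil_of_mem_Aset hl hS1, hl.2.1⟩
  have f1 : (inc '' Aset (S-1) L).Finite := (Aset_finite _ _).image _
  have f2 : (cons0 '' Bset (S-1) L).Finite := (Bset_finite _ _).image _
  have f3 : (if L = 0 then (∅ : Set (List ℤ)) else cons1 '' Bset (S-1) (L-1)).Finite := by
    split
    · exact Set.finite_empty
    · exact (Bset_finite _ _).image _
  have d12 : Disjoint (inc '' Aset (S-1) L) (cons0 '' Bset (S-1) L) := disj_inc_cons0 hXA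
  have d13 : Disjoint (inc '' Aset (S-1) L)
      (if L = 0 then (∅ : Set (List ℤ)) else cons1 '' Bset (S-1) (L-1)) := by
    split
    · simp
    · exact disj_inc_cons1 hXA
  have d23 : Disjoint (cons0 '' Bset (S-1) L)
      (if L = 0 then (∅ : Set (List ℤ)) else cons1 '' Bset (S-1) (L-1)) := by
    split
    · simp
    · exact disj_cons0_cons1 _ _
  rw [fA, Aset_decomp S L hS, Set.ncard_union_eq (Set.disjoint_union_left.2 ⟨d13, d23⟩)
      (f1.union f2) f3, Set.ncard_union_eq d12 f1 f2]
  rw [Set.ncard_image_of_injOn (inc_injOn_A _ _ hS1),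
    Set.ncard_image_of_injOn (cons0_inj.injOn),
    show fA (S-1) L = (Aset (S-1) L).ncard from rfl,
    show gB (S-1) L = (Bset (S-1) L).ncard from rfl]
  congr 1
  split
  · simp
  · rw [Set.ncard_image_of_injOn (cons1_inj.injOn)]; rfl

lemma gB_rec (S L : ℕ) (hS : 2 ≤ S) :
    gB S L = gB (S-1) L + fA (S-1) L + (if L = 0 then 0 else fA (S-1) (L-1)) := by
  have hS1 : 1 ≤ S - 1 := by omega
  have hXB : ∀ l ∈ Bset (S-1) L, l ≠ [] ∧ ∀ x ∈ l, x ≠ 0 :=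
    fun l hl => ⟨ne_nil_of_mem_Bset hl, hl.2.1⟩
  have f1 : (inc '' Bset (S-1) L).Finite := (Bset_finite _ _).image _
  have f2 : (cons0 '' Aset (S-1) L).Finite := (Aset_finite _ _).image _
  have f3 : (if L = 0 then (∅ : Set (List ℤ)) else cons1 '' Aset (S-1) (L-1)).Finite := by
    split
    · exact Set.finite_empty
    · exact (Aset_finite _ _).image _
  have d12 : Disjoint (inc '' Bset (S-1) L) (cons0 '' Aset (S-1) L) := disj_inc_cons0 hXB
  have d13 : Disjoint (inc '' Bset (S-1) L)
      (if L = 0 then (∅ : Set (List ℤ)) else cons1 '' Aset (S-1) (L-1)) := by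
    split
    · simp
    · exact disj_inc_cons1 hXB
  have d23 : Disjoint (cons0 '' Aset (S-1) L)
      (if L = 0 then (∅ : Set (List ℤ)) else cons1 '' Aset (S-1) (L-1)) := by
    split
    · simp
    · exact disj_cons0_cons1 _ _
  rw [gB, Bset_decomp S L hS, Set.ncard_union_eq (Set.disjoint_union_left.2 ⟨d13, d23⟩)
      (f1.union f2) f3, Set.ncard_union_eq d12 f1 f2]
  rw [Set.ncard_image_of_injOn (inc_injOn_B _ _),
    Set.ncard_image_of_injOn (cons0_inj.injOn),
    show gB (S-1) L = (Bset (S-1) L).ncard from rfl,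
    show fA (S-1) L = (Aset (S-1) L).ncard from rfl]
  congr 1
  split
  · simp
  · rw [Set.ncard_image_of_injOn (cons1_inj.injOn)]; rfl

lemma fA_one (L : ℕ) : fA 1 L = 0 := by
  rw [fA, Set.ncard_eq_zero (Aset_finite 1 L)]
  ext l
  simp only [Set.mem_empty_iff_false, iff_false]
  rintro ⟨he, hnz, hs, hc⟩
  match l, he with
  | [], _ => simp [absSum] at hs
  | a :: b :: t', he =>
    have ha : a ≠ 0 := hnz a (by simp)
    have hb : b ≠ 0 := hnz b (by simp)
    rw [absSum_cons, absSum_cons] at hs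
    have := Int.natAbs_eq_zero.not.2 ha
    have := Int.natAbs_eq_zero.not.2 hb
    omega
  | [a], he => simp at he

lemma gB_one (L : ℕ) : gB 1 L = if L = 0 then 2 else 0 := by
  have : Bset 1 L = if L = 0 then {[1], [-1]} else ∅ := by
    ext l
    constructor
    · rintro ⟨ho, hnz, hs, hc⟩
      match l, ho with
      | [a], _ =>
        have : absSum [a] = a.natAbs := by simp [absSum]
        have ha : a.natAbs = 1 := by omega
        rw [signChanges_single] at hc
        rw [if_pos hc.symm]
        rcases Int.natAbs_eq_iff.1 ha with rfl | rfl <;> simp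
      | a :: b :: t', ho =>
        exfalso
        have ha : a ≠ 0 := hnz a (by simp)
        have hb : b ≠ 0 := hnz b (by simp)
        rw [absSum_cons, absSum_cons] at hs
        have := Int.natAbs_eq_zero.not.2 ha
        have := Int.natAbs_eq_zero.not.2 hb
        omega
      | [], ho => simp at ho
    · intro hl
      split at hl
      · rcases hl with rfl | rfl <;>
          subst_vars <;>
          exact ⟨by simp, by simp, by simp [absSum], by simp [signChanges_single]⟩
      · simp at hl
  rw [gB, this]
  split
  · rw [Set.ncard_pair (by decide)]
  · simp

def Fc (S L : ℕ) : ℤ := (S-1).choose L * 2^(S-1-L) - (-1)^L * (if S = L+1 then 1 else 0)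
def Gc (S L : ℕ) : ℤ := (S-1).choose L * 2^(S-1-L) + (-1)^L * (if S = L+1 then 1 else 0)

lemma choose_pow_step (T M : ℕ) :
    ((T+1).choose (M+1) * 2^(T-M) : ℤ) =
      2 * (T.choose (M+1) * 2^(T-M-1)) + T.choose M * 2^(T-M) := by
  rcases lt_trichotomy M T with h | rfl | h
  · rw [Nat.choose_succ_succ]
    push_cast
    rw [show (2:ℤ)^(T-M) = 2^(T-M-1)*2 by rw [← pow_succ]; congr 1; omega]
    ring
  · simp [Nat.choose_succ_self]
  · rw [Nat.choose_eq_zero_of_lt (by omega), Nat.choose_eq_zero_of_lt (by omega),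
      Nat.choose_eq_zero_of_lt (by omega)]
    simp

lemma Fc_step (T L : ℕ) :
    Fc (T+2) L = Fc (T+1) L + Gc (T+1) L + (if L = 0 then 0 else Gc (T+1) (L-1)) := by
  rcases L with _ | M
  · simp only [Fc, Gc, if_pos rfl, Nat.add_sub_cancel, Nat.sub_zero, Nat.choose_zero_right]
    have : (T + 2 : ℕ) ≠ 0 + 1 := by omega
    have h2 : (T + 1 : ℕ) ≠ 0 + 1 ∨ T = 0 := by omega
    rcases Nat.eq_zero_or_pos T with rfl | hT
    · norm_num
    · rw [if_neg this, if_neg (by omega)]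
      push_cast
      rw [show (2:ℤ)^(T+1) = 2^T * 2 from pow_succ 2 T,
        show (2:ℤ)^T = 2^(T-1)*2 by rw [← pow_succ]; congr 1; omega]
      ring
  · simp only [Fc, Gc, Nat.add_sub_cancel, Nat.succ_sub_one, Nat.succ_ne_zero, if_neg,
      reduceIte]
    have e1 : T + 1 - (M + 1) = T - M := by omega
    have e2 : T - (M + 1) = T - M - 1 := by omega
    rw [e1, e2]
    by_cases hTM : T = M
    · subst hTM
      rw [if_pos rfl, if_pos rfl, if_neg (by omega), Nat.choose_self, Nat.choose_succ_self,
        Nat.sub_self]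
      rw [pow_succ]
      push_cast
      simp [Nat.choose_self]
    · rw [if_neg (show ¬((T:ℕ)+2 = M+1+1) by omega),
        if_neg (show ¬((T:ℕ)+1 = M+1) by omega)]
      linear_combination choose_pow_step T M

lemma Gc_step (T L : ℕ) :
    Gc (T+2) L = Gc (T+1) L + Fc (T+1) L + (if L = 0 then 0 else Fc (T+1) (L-1)) := by
  rcases L with _ | M
  · simp only [Fc, Gc, if_pos rfl, Nat.add_sub_cancel, Nat.sub_zero, Nat.choose_zero_right]
    rw [if_neg (show ¬((T:ℕ)+2 = 0+1) by omega),
      show T+2-1 = T+1 by omega,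
      show (2:ℤ)^(T+1) = 2^T * 2 from pow_succ 2 T]
    push_cast
    ring
  · simp only [Fc, Gc, Nat.add_sub_cancel, Nat.succ_sub_one, Nat.succ_ne_zero, if_neg,
      reduceIte]
    have e1 : T + 1 - (M + 1) = T - M := by omega
    have e2 : T - (M + 1) = T - M - 1 := by omega
    rw [e1, e2]
    by_cases hTM : T = M
    · subst hTM
      rw [if_pos rfl, if_pos rfl, if_neg (by omega), Nat.choose_self, Nat.choose_succ_self,
        Nat.sub_self]
      rw [pow_succ]
      push_cast
      simp only [Nat.choose_self, Nat.cast_one]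
      ring
    · rw [if_neg (show ¬((T:ℕ)+2 = M+1+1) by omega),
        if_neg (show ¬((T:ℕ)+1 = M+1) by omega)]
      linear_combination choose_pow_step T M

lemma closed_form : ∀ S, 1 ≤ S → ∀ L, (fA S L : ℤ) = Fc S L ∧ (gB S L : ℤ) = Gc S L := by
  intro S hS
  induction S, hS using Nat.le_induction with
  | base =>
    intro L
    constructor
    · rw [fA_one]
      rcases L with _ | M
      · simp [Fc]
      · simp [Fc, Nat.choose_eq_zero_of_lt (by omega : (0:ℕ) < M+1)]
    · rw [gB_one]
      rcases L with _ | M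
      · simp [Gc]
      · simp [Gc, Nat.choose_eq_zero_of_lt (by omega : (0:ℕ) < M+1)]
  | succ S hS ih =>
    intro L
    have hS2 : 2 ≤ S + 1 := by omega
    have hrecf := fA_rec (S+1) L hS2
    have hrecg := gB_rec (S+1) L hS2
    simp only [Nat.add_sub_cancel] at hrecf hrecg
    obtain ⟨T, rfl⟩ : ∃ T, S = T + 1 := ⟨S - 1, by omega⟩
    constructor
    · rw [hrecf, Fc_step]
      push_cast
      rw [(ih L).1, (ih L).2]
      rcases L with _ | M
      · simp
      · simp [Nat.add_sub_cancel, (ih M).2]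
    · rw [hrecg, Gc_step]
      push_cast
      rw [(ih L).1, (ih L).2]
      rcases L with _ | M
      · simp
      · simp [Nat.add_sub_cancel, (ih M).1]

def tau (c : ℕ) : ℕ := ∑ k ∈ Finset.range c, (c-2-k).choose k * 2^k
def sig (c : ℕ) : ℕ := ∑ k ∈ Finset.range c, (k+2) * ((c-2-k).choose k * 2^k)

lemma pascal_term (d k : ℕ) :
    (d+1-k).choose (k+1) = (d-k).choose (k+1) + (d-k).choose k := by
  rcases le_or_gt k d with h | h
  · rw [show d+1-k = (d-k)+1 by omega, Nat.choose_succ_succ']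
    omega
  · rw [show d+1-k = d-k by omega]
    rcases Nat.lt_or_ge (d-k) (k+1) with h2 | h2
    · rw [Nat.choose_eq_zero_of_lt h2, Nat.choose_eq_zero_of_lt (by omega)]
    · omega

lemma tau_shift (n : ℕ) : tau (n+2) = ∑ k ∈ Finset.range (n+2), (n-k).choose k * 2^k := by
  rw [tau]
  exact Finset.sum_congr rfl (fun k hk => by rw [show n+2-2-k = n-k by omega])

lemma sig_shift (n : ℕ) :
    sig (n+2) = ∑ k ∈ Finset.range (n+2), (k+2) * ((n-k).choose k * 2^k) := by
  rw [sig]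
  exact Finset.sum_congr rfl (fun k hk => by rw [show n+2-2-k = n-k by omega])

lemma tau_rec (d : ℕ) : tau (d+4) = tau (d+3) + 2 * tau (d+2) := by
  have hA : tau (d+4) = (∑ k ∈ Finset.range (d+3), (d+1-k).choose (k+1) * 2^(k+1)) + 1 := by
    rw [show d+4 = (d+2)+2 by omega, tau_shift, Finset.sum_range_succ']
    congr 1
    exact Finset.sum_congr rfl (fun k hk => by rw [show d+2-(k+1) = d+1-k by omega])
  have hB : (∑ k ∈ Finset.range (d+3), (d+1-k).choose (k+1) * 2^(k+1))
      = (∑ k ∈ Finset.range (d+3), (d-k).choose (k+1) * 2^(k+1))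
        + (∑ k ∈ Finset.range (d+3), (d-k).choose k * 2^(k+1)) := by
    rw [← Finset.sum_add_distrib]
    exact Finset.sum_congr rfl (fun k hk => by rw [pascal_term d k, Nat.add_mul])
  have hC : tau (d+3) = (∑ k ∈ Finset.range (d+3), (d-k).choose (k+1) * 2^(k+1)) + 1 := by
    rw [show d+3 = (d+1)+2 by omega, tau_shift, Finset.sum_range_succ']
    conv_rhs => rw [Finset.sum_range_succ]
    rw [Nat.choose_eq_zero_of_lt (show d-(d+2) < d+3 by omega)]
    simp only [Nat.zero_mul, Nat.add_zero, Nat.choose_zero_right, pow_zero, Nat.mul_one,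
      Nat.one_mul]
    congr 1
    exact Finset.sum_congr rfl (fun k hk => by rw [show d+1-(k+1) = d-k by omega])
  have hD : (∑ k ∈ Finset.range (d+3), (d-k).choose k * 2^(k+1)) = 2 * tau (d+2) := by
    rw [Finset.sum_range_succ, Nat.choose_eq_zero_of_lt (show d-(d+2) < d+2 by omega),
      Nat.zero_mul, Nat.add_zero, tau_shift, Finset.mul_sum]
    exact Finset.sum_congr rfl (fun k hk => by rw [pow_succ]; ring)
  rw [hA, hB, hD]
  omega

lemma sig_rec (d : ℕ) : sig (d+4) = sig (d+3) + 2 * sig (d+2) + 2 * tau (d+2) := by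
  have hA : sig (d+4)
      = (∑ k ∈ Finset.range (d+3), (k+3) * ((d+1-k).choose (k+1) * 2^(k+1))) + 2 := by
    rw [show d+4 = (d+2)+2 by omega, sig_shift, Finset.sum_range_succ']
    congr 1
    exact Finset.sum_congr rfl (fun k hk => by
      rw [show d+2-(k+1) = d+1-k by omega, show k+1+2 = k+3 by omega])
  have hB : (∑ k ∈ Finset.range (d+3), (k+3) * ((d+1-k).choose (k+1) * 2^(k+1)))
      = (∑ k ∈ Finset.range (d+3), (k+3) * ((d-k).choose (k+1) * 2^(k+1)))
        + ((∑ k ∈ Finset.range (d+3), (k+2) * ((d-k).choose k * 2^(k+1)))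
          + (∑ k ∈ Finset.range (d+3), (d-k).choose k * 2^(k+1))) := by
    rw [← Finset.sum_add_distrib, ← Finset.sum_add_distrib]
    exact Finset.sum_congr rfl (fun k hk => by rw [pascal_term d k]; ring)
  have hC : sig (d+3)
      = (∑ k ∈ Finset.range (d+3), (k+3) * ((d-k).choose (k+1) * 2^(k+1))) + 2 := by
    rw [show d+3 = (d+1)+2 by omega, sig_shift, Finset.sum_range_succ']
    conv_rhs => rw [Finset.sum_range_succ]
    rw [Nat.choose_eq_zero_of_lt (show d-(d+2) < d+3 by omega)]
    simp only [Nat.zero_mul, Nat.mul_zero, Nat.add_zero, Nat.choose_zero_right, pow_zero,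
      Nat.mul_one, Nat.one_mul]
    congr 1
    exact Finset.sum_congr rfl (fun k hk => by
      rw [show d+1-(k+1) = d-k by omega, show k+1+2 = k+3 by omega])
  have hD : (∑ k ∈ Finset.range (d+3), (k+2) * ((d-k).choose k * 2^(k+1))) = 2 * sig (d+2) := by
    rw [Finset.sum_range_succ, Nat.choose_eq_zero_of_lt (show d-(d+2) < d+2 by omega)]
    simp only [Nat.zero_mul, Nat.mul_zero, Nat.add_zero]
    rw [sig_shift, Finset.mul_sum]
    exact Finset.sum_congr rfl (fun k hk => by rw [pow_succ]; ring)
  have hE : (∑ k ∈ Finset.range (d+3), (d-k).choose k * 2^(k+1)) = 2 * tau (d+2) := by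
    rw [Finset.sum_range_succ, Nat.choose_eq_zero_of_lt (show d-(d+2) < d+2 by omega),
      Nat.zero_mul, Nat.add_zero, tau_shift, Finset.mul_sum]
    exact Finset.sum_congr rfl (fun k hk => by rw [pow_succ]; ring)
  rw [hA, hB, hD, hE]
  omega

lemma tau_pow : ∀ c, 2 ≤ c → tau c + tau (c+1) = 2^(c-1) := by
  intro c hc
  induction c, hc using Nat.le_induction with
  | base => norm_num [tau, Finset.sum_range_succ]
  | succ c hc ih =>
    obtain ⟨d, rfl⟩ : ∃ d, c = d + 2 := ⟨c - 2, by omega⟩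
    have ih' : tau (d+2) + tau (d+3) = 2^(d+2-1) := by
      rw [show d+3 = d+2+1 by omega]; exact ih
    rw [show d+2+1+1 = d+4 by omega, tau_rec d, show d+2+1 = d+3 by omega]
    rw [show d+2+1-1 = (d+2-1)+1 by omega, pow_succ]
    omega

lemma Eset_eq_Aset (c b : ℕ) (hb2 : 2 ≤ b) (hbc : 2*b ≤ c+2) :
    Eset c b = Aset (c+1-b) (c+2-2*b) := by
  have hbc' : b ≤ c := by omega
  ext l
  constructor
  · rintro ⟨⟨hne, he, hnz⟩, h1, h2⟩
    refine ⟨he, hnz, ?_, ?_⟩ <;> omega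
  · rintro ⟨he, hnz, hs, hc2⟩
    have hne : l ≠ [] := by
      rintro rfl
      simp [absSum] at hs
      omega
    exact ⟨⟨hne, he, hnz⟩, by omega, by omega⟩

lemma e_eq (c b : ℕ) (hb2 : 2 ≤ b) (hbc : 2*b ≤ c+2) :
    e c b = fA (c+1-b) (c+2-2*b) := by
  rw [e, Eset_eq_Aset c b hb2 hbc]; rfl

lemma tbi_eq (c : ℕ) (hc : 2 ≤ c) : (tbi c : ℤ) = (sig c : ℤ) - 2 * (-1)^c := by
  have hmem2 : 2 ∈ Finset.Icc 2 ((c+2)/2) := by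
    simp only [Finset.mem_Icc]
    omega
  rw [tbi]
  push_cast
  have hterm : ∀ b ∈ Finset.Icc 2 ((c+2)/2),
      (b : ℤ) * (e c b : ℤ)
        = ((b * ((c-b).choose (b-2) * 2^(b-2)) : ℕ) : ℤ)
          - (if b = 2 then 2 * (-1)^c else 0) := by
    intro b hb
    simp only [Finset.mem_Icc] at hb
    obtain ⟨hb2, hbB⟩ := hb
    have hbc : 2*b ≤ c+2 := by omega
    have hS1 : 1 ≤ c+1-b := by omega
    rw [e_eq c b hb2 hbc, (closed_form (c+1-b) hS1 (c+2-2*b)).1, Fc]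
    rw [show c+1-b-1 = c-b by omega, show c-b-(c+2-2*b) = b-2 by omega]
    have e3 : (c-b).choose (c+2-2*b) = (c-b).choose (b-2) := by
      rw [← Nat.choose_symm (show b-2 ≤ c-b by omega)]
      congr 1
      omega
    have e4 : ((-1:ℤ))^(c+2-2*b) = (-1)^c := by
      have h5 : ((-1:ℤ))^(c+2-2*b) * ((-1)^2)^(b-1) = (-1)^c := by
        rw [← pow_mul, ← pow_add]
        congr 1
        omega
      simpa using h5
    rw [e3, e4]
    have e5 : ((if c+1-b = (c+2-2*b)+1 then (1:ℤ) else 0)) = if b = 2 then 1 else 0 := by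
      rcases eq_or_ne b 2 with rfl | hb'
      · rw [if_pos (by omega), if_pos rfl]
      · rw [if_neg (by omega), if_neg hb']
    rw [e5]
    push_cast
    rcases eq_or_ne b 2 with rfl | hb'
    · norm_num
      ring
    · simp only [if_neg hb']
      ring
  rw [Finset.sum_congr rfl hterm, Finset.sum_sub_distrib]
  have hsum : (∑ b ∈ Finset.Icc 2 ((c+2)/2), b * ((c-b).choose (b-2) * 2^(b-2))) = sig c := by
    rw [← Finset.Ico_add_one_right_eq_Icc, Finset.sum_Ico_eq_sum_range]
    have h6 : ∀ i ∈ Finset.range ((c+2)/2 + 1 - 2),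
        (2+i) * ((c-(2+i)).choose (2+i-2) * 2^(2+i-2))
          = (i+2) * ((c-2-i).choose i * 2^i) := by
      intro i hi
      rw [show 2+i-2 = i by omega, show c-(2+i) = c-2-i by omega, show 2+i = i+2 by omega]
    rw [Finset.sum_congr rfl h6, sig]
    apply Finset.sum_subset
    · intro x hx
      simp only [Finset.mem_range] at hx ⊢
      omega
    · intro x hx hnx
      simp only [Finset.mem_range] at hx hnx
      rw [Nat.choose_eq_zero_of_lt (show c-2-x < x by omega)]
      simp
  have hdelta : (∑ b ∈ Finset.Icc 2 ((c+2)/2), (if b = 2 then 2 * (-1:ℤ)^c else 0))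
      = 2 * (-1:ℤ)^c := by
    rw [Finset.sum_ite_eq' (Finset.Icc 2 ((c+2)/2)) 2 (fun _ => 2 * (-1:ℤ)^c),
      if_pos hmem2]
  rw [hdelta]
  congr 1
  rw [← hsum]
  push_cast
  rfl


theorem tbi_recursion (c : ℕ) (hc : 6 ≤ c) :
    tbi c = 3 * tbi (c - 2) + 2 * tbi (c - 3) + 2 ^ (c - 3) := by
  obtain ⟨d, rfl⟩ : ∃ d, c = d + 6 := ⟨c - 6, by omega⟩
  rw [show d+6-2 = d+4 by omega, show d+6-3 = d+3 by omega]
  have hsig : sig (d+6) = 3 * sig (d+4) + 2 * sig (d+3) + 2^(d+3) := by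
    have h1 := sig_rec (d+2)
    have h2 := sig_rec (d+1)
    have h3 := tau_pow (d+3) (by omega)
    rw [show d+2+4 = d+6 by omega, show d+2+3 = d+5 by omega, show d+2+2 = d+4 by omega] at h1
    rw [show d+1+4 = d+5 by omega, show d+1+3 = d+4 by omega, show d+1+2 = d+3 by omega] at h2
    rw [show d+3+1 = d+4 by omega, show d+3-1 = d+2 by omega] at h3
    have hp : (2:ℕ)^(d+3) = 2^(d+2) * 2 := pow_succ 2 (d+2)
    omega
  have t1 := tbi_eq (d+6) (by omega)
  have t2 := tbi_eq (d+4) (by omega)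
  have t3 := tbi_eq (d+3) (by omega)
  have hm1 : ((-1:ℤ))^(d+6) = (-1)^d := by rw [pow_add]; norm_num
  have hm2 : ((-1:ℤ))^(d+4) = (-1)^d := by rw [pow_add]; norm_num
  have hm3 : ((-1:ℤ))^(d+3) = -(-1:ℤ)^d := by rw [pow_add]; norm_num
  have hsigZ : ((sig (d+6) : ℤ)) = 3 * (sig (d+4) : ℤ) + 2 * (sig (d+3) : ℤ) + 2^(d+3) := by
    exact_mod_cast congrArg (fun n : ℕ => (n : ℤ)) hsig
  have key : (tbi (d+6) : ℤ) = ((3 * tbi (d+4) + 2 * tbi (d+3) + 2^(d+3) : ℕ) : ℤ) := by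
    push_cast
    rw [t1, t2, t3, hm1, hm2, hm3, hsigZ]
    ring
  exact_mod_cast key
end
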